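/- Let (X, 𝔅, μ) be a probability space, b ∈ (1, ∞], λ ≥ 0, Z ≥ 0, and ψ ∈ Ψ(b). Suppose f : X → ℝ is measurable with N := sup_{p ∈ [1, b)} |f|_p / ψ(p) < ∞, and g : X → ℝ is measurable with |g|_p ≤ Z · (p/(p−1))^λ · |f|_p for every p ∈ (1, b). Then sup_{p ∈ [1, b)} |g|_p / ψ(p) ≤ K_λ[ψ, b] · Z · N. -/

import Mathlib

open MeasureTheory ENNReal Real Set

/-- **Theorem 3.1.** An operator of type `(λ, λ)` is bounded on the Grand Lebesgue Space
`Gψ`, with norm at most `Z · K_λ[ψ,b]`, where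
`K_λ[ψ,b] = inf_{q ∈ (1,b)} (q/(q-1))^λ ψ(q)`. -/
theorem thm_3_1 {X : Type*} [MeasurableSpace X] (μ : Measure X) [IsProbabilityMeasure μ]
    (b : EReal) (hb : 1 < b) (lam Z : ℝ) (hlam : 0 ≤ lam) (hZ : 0 ≤ Z)
    (ψ : ℝ → ℝ)
    (hψcont : ContinuousOn ψ {p : ℝ | 1 ≤ p ∧ (p : EReal) < b})
    (hψone : ∀ p : ℝ, 1 ≤ p → (p : EReal) < b → 1 ≤ ψ p)
    (f g : X → ℝ) (hf : Measurable f) (hg : Measurable g)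
    (hN : (⨆ (p : ℝ) (_ : 1 ≤ p) (_ : (p : EReal) < b),
        eLpNorm f (ENNReal.ofReal p) μ / ENNReal.ofReal (ψ p)) < ⊤)
    (hQ : ∀ p : ℝ, 1 < p → (p : EReal) < b →
      eLpNorm g (ENNReal.ofReal p) μ ≤
        ENNReal.ofReal (Z * (p / (p - 1)) ^ lam) * eLpNorm f (ENNReal.ofReal p) μ) :
    (⨆ (p : ℝ) (_ : 1 ≤ p) (_ : (p : EReal) < b),
        eLpNorm g (ENNReal.ofReal p) μ / ENNReal.ofReal (ψ p)) ≤
      ENNReal.ofReal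
          (sInf ((fun q : ℝ => (q / (q - 1)) ^ lam * ψ q) '' {q : ℝ | 1 < q ∧ (q : EReal) < b}) *
            Z) *
        (⨆ (p : ℝ) (_ : 1 ≤ p) (_ : (p : EReal) < b),
          eLpNorm f (ENNReal.ofReal p) μ / ENNReal.ofReal (ψ p)) := by
  set N := (⨆ (p : ℝ) (_ : 1 ≤ p) (_ : (p : EReal) < b),
      eLpNorm f (ENNReal.ofReal p) μ / ENNReal.ofReal (ψ p)) with hNdef
  set S := ((fun q : ℝ => (q / (q - 1)) ^ lam * ψ q) '' {q : ℝ | 1 < q ∧ (q : EReal) < b})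
    with hSdef
  -- `S` is nonempty
  obtain ⟨q0, hq01, hq0b⟩ := EReal.lt_iff_exists_real_btwn.1 hb
  have hq01' : (1 : ℝ) < q0 := by exact_mod_cast hq01
  have hSne : S.Nonempty := ⟨_, ⟨q0, ⟨hq01', hq0b⟩, rfl⟩⟩
  -- every element of `S` is at least `1`
  have hS1 : ∀ s ∈ S, (1 : ℝ) ≤ s := by
    rintro s ⟨q, ⟨hq1, hqb⟩, rfl⟩
    have h1 : (1 : ℝ) ≤ q / (q - 1) := by
      rw [le_div_iff₀ (by linarith)]; linarith
    exact one_le_mul_of_one_le_of_one_le (Real.one_le_rpow h1 hlam)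
      (hψone q (le_of_lt hq1) hqb)
  have hK1 : (1 : ℝ) ≤ sInf S := le_csInf hSne hS1
  -- `N` bounds `|f|_p`
  have hfN : ∀ p : ℝ, 1 ≤ p → (p : EReal) < b →
      eLpNorm f (ENNReal.ofReal p) μ ≤ ENNReal.ofReal (ψ p) * N := by
    intro p hp1 hpb
    have hψp : (1 : ℝ) ≤ ψ p := hψone p hp1 hpb
    have hle : eLpNorm f (ENNReal.ofReal p) μ / ENNReal.ofReal (ψ p) ≤ N :=
      le_iSup_of_le p <| le_iSup_of_le hp1 <| le_iSup_of_le hpb le_rfl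
    rw [ENNReal.div_le_iff (by simp [ENNReal.ofReal_pos]; linarith) ENNReal.ofReal_ne_top] at hle
    rwa [mul_comm] at hle
  -- the key pointwise estimate
  have key : ∀ p : ℝ, 1 ≤ p → (p : EReal) < b → ∀ q : ℝ, 1 < q → (q : EReal) < b →
      eLpNorm g (ENNReal.ofReal p) μ / ENNReal.ofReal (ψ p) ≤
        ENNReal.ofReal ((q / (q - 1)) ^ lam * ψ q) * (ENNReal.ofReal Z * N) := by
    intro p hp1 hpb q hq1 hqb
    have hψp : (1 : ℝ) ≤ ψ p := hψone p hp1 hpb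
    have hψq : (1 : ℝ) ≤ ψ q := hψone q hq1.le hqb
    have hψp0 : ENNReal.ofReal (ψ p) ≠ 0 := by simp [ENNReal.ofReal_pos]; linarith
    have hqpow0 : (0 : ℝ) ≤ (q / (q - 1)) ^ lam :=
      Real.rpow_nonneg (div_nonneg (by linarith) (by linarith)) lam
    rcases le_or_gt p q with hpq | hqp
    · -- use monotonicity of the `L^p` norms
      have hmono : eLpNorm g (ENNReal.ofReal p) μ ≤ eLpNorm g (ENNReal.ofReal q) μ :=
        eLpNorm_le_eLpNorm_of_exponent_le (ENNReal.ofReal_le_ofReal hpq)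
          hg.aestronglyMeasurable
      calc eLpNorm g (ENNReal.ofReal p) μ / ENNReal.ofReal (ψ p)
          ≤ eLpNorm g (ENNReal.ofReal p) μ / 1 :=
            ENNReal.div_le_div le_rfl (by simpa using ENNReal.one_le_ofReal.2 hψp)
        _ = eLpNorm g (ENNReal.ofReal p) μ := by simp
        _ ≤ eLpNorm g (ENNReal.ofReal q) μ := hmono
        _ ≤ ENNReal.ofReal (Z * (q / (q - 1)) ^ lam) * eLpNorm f (ENNReal.ofReal q) μ :=
            hQ q hq1 hqb
        _ ≤ ENNReal.ofReal (Z * (q / (q - 1)) ^ lam) * (ENNReal.ofReal (ψ q) * N) := by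
            gcongr; exact hfN q hq1.le hqb
        _ = ENNReal.ofReal ((q / (q - 1)) ^ lam * ψ q) * (ENNReal.ofReal Z * N) := by
            rw [ENNReal.ofReal_mul hZ, ENNReal.ofReal_mul hqpow0]; ring
    · -- use the hypothesis at `p` and monotonicity of `x ↦ x/(x-1)`
      have hp1' : (1 : ℝ) < p := hq1.trans hqp
      have hdiv : p / (p - 1) ≤ q / (q - 1) := by
        rw [div_le_div_iff₀ (by linarith) (by linarith)]; nlinarith
      have hpow : (p / (p - 1)) ^ lam ≤ (q / (q - 1)) ^ lam :=
        Real.rpow_le_rpow (div_nonneg (by linarith) (by linarith)) hdiv hlam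
      rw [ENNReal.div_le_iff hψp0 ENNReal.ofReal_ne_top]
      calc eLpNorm g (ENNReal.ofReal p) μ
          ≤ ENNReal.ofReal (Z * (p / (p - 1)) ^ lam) * eLpNorm f (ENNReal.ofReal p) μ :=
            hQ p hp1' hpb
        _ ≤ ENNReal.ofReal (Z * (p / (p - 1)) ^ lam) * (ENNReal.ofReal (ψ p) * N) := by
            gcongr; exact hfN p hp1'.le hpb
        _ ≤ ENNReal.ofReal (Z * ((q / (q - 1)) ^ lam * ψ q)) * (ENNReal.ofReal (ψ p) * N) := by
            refine mul_le_mul_left (ENNReal.ofReal_le_ofReal ?_) _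
            calc Z * (p / (p - 1)) ^ lam ≤ Z * (q / (q - 1)) ^ lam := by
                  apply mul_le_mul_of_nonneg_left hpow hZ
              _ ≤ Z * ((q / (q - 1)) ^ lam * ψ q) := by
                  apply mul_le_mul_of_nonneg_left _ hZ
                  nlinarith
        _ = ENNReal.ofReal ((q / (q - 1)) ^ lam * ψ q) * (ENNReal.ofReal Z * N) *
              ENNReal.ofReal (ψ p) := by
            rw [ENNReal.ofReal_mul hZ]; ring
  -- conclude
  refine iSup_le fun p => iSup_le fun hp1 => iSup_le fun hpb => ?_
  apply ENNReal.le_of_forall_pos_le_add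
  intro ε hε _
  set C := ENNReal.ofReal Z * N with hCdef
  have hCt : C ≠ ⊤ := ENNReal.mul_ne_top ENNReal.ofReal_ne_top hN.ne
  by_cases hC : C = 0
  · calc eLpNorm g (ENNReal.ofReal p) μ / ENNReal.ofReal (ψ p)
        ≤ ENNReal.ofReal ((q0 / (q0 - 1)) ^ lam * ψ q0) * C := key p hp1 hpb q0 hq01' hq0b
      _ = 0 := by rw [hC, mul_zero]
      _ ≤ _ := zero_le
  · have hδpos : (0 : ℝ≥0∞) < (ε : ℝ≥0∞) / C := ENNReal.div_pos (by exact_mod_cast hε.ne') hCt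
    have hδtop : (ε : ℝ≥0∞) / C ≠ ⊤ := (ENNReal.div_lt_top ENNReal.coe_ne_top hC).ne
    set δ := ((ε : ℝ≥0∞) / C).toReal with hδdef
    have hδ : 0 < δ := ENNReal.toReal_pos hδpos.ne' hδtop
    obtain ⟨s, hsS, hs⟩ := exists_lt_of_csInf_lt hSne (lt_add_of_pos_right (sInf S) hδ)
    obtain ⟨q, ⟨hq1, hqb⟩, rfl⟩ := hsS
    calc eLpNorm g (ENNReal.ofReal p) μ / ENNReal.ofReal (ψ p)
        ≤ ENNReal.ofReal ((q / (q - 1)) ^ lam * ψ q) * C := key p hp1 hpb q hq1 hqb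
      _ ≤ ENNReal.ofReal (sInf S + δ) * C :=
          mul_le_mul_left (ENNReal.ofReal_le_ofReal hs.le) C
      _ = ENNReal.ofReal (sInf S) * C + ENNReal.ofReal δ * C := by
          rw [ENNReal.ofReal_add (by linarith) hδ.le, add_mul]
      _ = ENNReal.ofReal (sInf S * Z) * N + ε := by
          congr 1
          · rw [ENNReal.ofReal_mul (by linarith), hCdef]; ring
          · rw [hδdef, ENNReal.ofReal_toReal hδtop, ENNReal.div_mul_cancel hC hCt]
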